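/- arXiv:1803.01930 — 4 statements merged into one kernel-verified Lean document; each statement's English description precedes it below -/
import Mathlib

section
/- For every sequence σ = (σ(1), …, σ(k)) and every start time t ∈ ℝ, the active duration equals the total service time plus the total travel time plus the total waiting time: A(σ, t) = Σ_{i=1}^k s_{σ(i)} + Σ_{i=2}^k d_{σ(i−1) σ(i)} + Σ_{i=1}^k max(a_{σ(i)} − τ_i, 0), where τ_i are the arrival times of the forward schedule of σ started at t. In particular, A(σ, t) ≥ 0 for all t. -/
variable {V : Type*}

/-- Service start time at a visit: `h = max(a v, min(τ, b v))`. -/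
noncomputable def svcStart (a b : V → ℝ) (v : V) (t : ℝ) : ℝ :=
  max (a v) (min t (b v))

/-- Completion time `C(σ, t)` of the forward schedule of `σ` started at `t`. -/
noncomputable def comp (a b s : V → ℝ) (d : V → V → ℝ) : List V → ℝ → ℝ
  | [], t => t
  | [v], t => svcStart a b v t + s v
  | v :: w :: rest, t => comp a b s d (w :: rest) (svcStart a b v t + s v + d v w)

/-- Total time warp `W(σ, t)` of the forward schedule of `σ` started at `t`. -/
noncomputable def warp (a b s : V → ℝ) (d : V → V → ℝ) : List V → ℝ → ℝ
  | [], _ => 0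
  | [v], t => max (t - b v) 0
  | v :: w :: rest, t =>
      max (t - b v) 0 + warp a b s d (w :: rest) (svcStart a b v t + s v + d v w)

/-- Active duration `A(σ, t) = C(σ, t) − t + W(σ, t)`. -/
noncomputable def activeDur (a b s : V → ℝ) (d : V → V → ℝ) (σ : List V) (t : ℝ) : ℝ :=
  comp a b s d σ t - t + warp a b s d σ t

/-- Arrival times `τ_1, …, τ_k` of the forward schedule of `σ` started at `t`. -/
noncomputable def arrivals (a b s : V → ℝ) (d : V → V → ℝ) : List V → ℝ → List ℝ
  | [], _ => []
  | [_], t => [t]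
  | v :: w :: rest, t => t :: arrivals a b s d (w :: rest) (svcStart a b v t + s v + d v w)


lemma svcStart_key (a b : V → ℝ) (v : V) (t : ℝ) (hab : a v ≤ b v) :
    svcStart a b v t - t + max (t - b v) 0 = max (a v - t) 0 := by
  unfold svcStart
  simp only [max_def, min_def]
  split_ifs <;> linarith

lemma activeDur_eq (a b s : V → ℝ) (d : V → V → ℝ)
    (hab : ∀ v, a v ≤ b v) :
    ∀ (σ : List V) (t : ℝ), σ ≠ [] →
    activeDur a b s d σ t =
        (σ.map s).sum
      + ((σ.zip σ.tail).map fun p => d p.1 p.2).sum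
      + ((σ.zip (arrivals a b s d σ t)).map fun p => max (a p.1 - p.2) 0).sum
  | [], _, h => absurd rfl h
  | [v], t, _ => by
      simp [activeDur, comp, warp, arrivals]
      have := svcStart_key a b v t (hab v)
      linarith
  | v :: w :: rest, t, _ => by
      have IH := activeDur_eq a b s d hab (w :: rest)
        (svcStart a b v t + s v + d v w) (by simp)
      simp only [activeDur, comp, warp, arrivals, List.map_cons, List.sum_cons,
        List.tail_cons, List.zip_cons_cons] at IH ⊢
      have := svcStart_key a b v t (hab v)
      linarith

/-- For every nonempty sequence `σ` and start time `t`, the active duration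
equals total service time plus total travel time plus total waiting time:
`A(σ,t) = Σᵢ s_{σ(i)} + Σ_{i≥2} d_{σ(i−1) σ(i)} + Σᵢ max(a_{σ(i)} − τᵢ, 0)`.
In particular `A(σ, t) ≥ 0`. -/
theorem activeDur_eq_service_add_travel_add_wait [Fintype V]
    (a b s : V → ℝ) (d : V → V → ℝ)
    (hs : ∀ v, 0 ≤ s v) (hab : ∀ v, a v ≤ b v) (hd : ∀ u v, 0 ≤ d u v)
    (σ : List V) (hσ : σ ≠ []) (t : ℝ) :
    activeDur a b s d σ t =
        (σ.map s).sum
      + ((σ.zip σ.tail).map fun p => d p.1 p.2).sum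
      + ((σ.zip (arrivals a b s d σ t)).map fun p => max (a p.1 - p.2) 0).sum ∧
    0 ≤ activeDur a b s d σ t := by
  have h := activeDur_eq a b s d hab σ t hσ
  refine ⟨h, ?_⟩
  rw [h]
  have h1 : 0 ≤ (σ.map s).sum :=
    List.sum_nonneg (by intro x hx; simp at hx; obtain ⟨v, _, rfl⟩ := hx; exact hs v)
  have h2 : 0 ≤ ((σ.zip σ.tail).map fun p => d p.1 p.2).sum :=
    List.sum_nonneg (by intro x hx; simp at hx; obtain ⟨u, v, _, rfl⟩ := hx; exact hd u v)
  have h3 : 0 ≤ ((σ.zip (arrivals a b s d σ t)).map fun p => max (a p.1 - p.2) 0).sum :=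
    List.sum_nonneg (by intro x hx; simp at hx; obtain ⟨u, r, _, rfl⟩ := hx; exact le_max_right _ _)
  linarith
end

section
/- For every sequence σ there exist unique real numbers D(σ), E(σ), L(σ), TW(σ) with D(σ) ≥ 0, TW(σ) ≥ 0 and E(σ) ≤ L(σ) such that for every start time t ∈ ℝ: W(σ, t) = TW(σ) + max(t − L(σ), 0) and A(σ, t) = D(σ) + max(E(σ) − t, 0). (Thus a sequence is fully characterized, for move evaluation purposes, by its minimum duration D, minimum time warp TW, and the interval [E, L] of start times achieving both.) -/
variable {V : Type*}

set_option maxHeartbeats 2000000 in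
private lemma key0 (av bv sv t : ℝ) (hab : av ≤ bv) :
    max av (min t bv) + sv - t + max (t - bv) 0 = sv + max (av - t) 0 := by
  rcases le_total t av with h1 | h1 <;> rcases le_total t bv with h2 | h2 <;>
    simp [max_def, min_def] <;> split_ifs <;> linarith

set_option maxHeartbeats 2000000 in
private lemma key1 (av bv c L t : ℝ) (hab : av ≤ bv) (_hc : 0 ≤ c) :
    max (t - bv) 0 + max ((max av (min t bv) + c) - L) 0
      = max (av + c - L) 0 + max (t - max av (min (L - c) bv)) 0 := by
  rcases le_total t av with h1 | h1 <;> rcases le_total t bv with h2 | h2 <;>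
    rcases le_total (L - c) av with h3 | h3 <;> rcases le_total (L - c) bv with h4 | h4 <;>
    rcases le_total t (L - c) with h5 | h5 <;>
    simp [max_def, min_def] <;> split_ifs <;> linarith

set_option maxHeartbeats 2000000 in
private lemma key2 (av bv c E D t : ℝ) (hab : av ≤ bv) (_hc : 0 ≤ c) :
    D + max (E - (max av (min t bv) + c)) 0 + (max av (min t bv) + c) - t + max (t - bv) 0
      = (D + c + max (E - c - bv) 0) + max (max av (min (E - c) bv) - t) 0 := by
  rcases le_total t av with h1 | h1 <;> rcases le_total t bv with h2 | h2 <;>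
    rcases le_total (E - c) av with h3 | h3 <;> rcases le_total (E - c) bv with h4 | h4 <;>
    rcases le_total t (E - c) with h5 | h5 <;>
    simp [max_def, min_def] <;> split_ifs <;> linarith

private lemma uniq1 (c1 L1 c2 L2 : ℝ)
    (h : ∀ t : ℝ, c1 + max (t - L1) 0 = c2 + max (t - L2) 0) : c1 = c2 ∧ L1 = L2 := by
  have h1 := h (min L1 L2)
  rw [max_eq_right (by simp [sub_nonpos, min_le_left]),
      max_eq_right (by simp [sub_nonpos, min_le_right])] at h1
  have hc : c1 = c2 := by linarith
  have h2 := h (max L1 L2 + 1)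
  have e1 : max (max L1 L2 + 1 - L1) 0 = max L1 L2 + 1 - L1 :=
    max_eq_left (by have := le_max_left L1 L2; linarith)
  have e2 : max (max L1 L2 + 1 - L2) 0 = max L1 L2 + 1 - L2 :=
    max_eq_left (by have := le_max_right L1 L2; linarith)
  rw [e1, e2] at h2
  exact ⟨hc, by linarith⟩

private lemma uniq2 (c1 E1 c2 E2 : ℝ)
    (h : ∀ t : ℝ, c1 + max (E1 - t) 0 = c2 + max (E2 - t) 0) : c1 = c2 ∧ E1 = E2 := by
  have h1 := h (max E1 E2)
  rw [max_eq_right (by simp [sub_nonpos, le_max_left]),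
      max_eq_right (by simp [sub_nonpos, le_max_right])] at h1
  have hc : c1 = c2 := by linarith
  have h2 := h (min E1 E2 - 1)
  have e1 : max (E1 - (min E1 E2 - 1)) 0 = E1 - (min E1 E2 - 1) :=
    max_eq_left (by have := min_le_left E1 E2; linarith)
  have e2 : max (E2 - (min E1 E2 - 1)) 0 = E2 - (min E1 E2 - 1) :=
    max_eq_left (by have := min_le_right E1 E2; linarith)
  rw [e1, e2] at h2
  exact ⟨hc, by linarith⟩

private lemma char_aux (a b s : V → ℝ) (d : V → V → ℝ)
    (hs : ∀ v, 0 ≤ s v) (hab : ∀ v, a v ≤ b v) (hd : ∀ u v, 0 ≤ d u v) :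
    ∀ σ : List V, σ ≠ [] →
      ∃ D E L TW : ℝ, 0 ≤ D ∧ 0 ≤ TW ∧ E ≤ L ∧
        ∀ t : ℝ, warp a b s d σ t = TW + max (t - L) 0 ∧
          activeDur a b s d σ t = D + max (E - t) 0
  | [], h => absurd rfl h
  | [v], _ => by
      refine ⟨s v, a v, b v, 0, hs v, le_refl 0, hab v, fun t => ?_⟩
      constructor
      · simp [warp]
      · simp only [activeDur, comp, warp, svcStart]
        have := key0 (a v) (b v) (s v) t (hab v)
        linarith
  | v :: w :: rest, _ => by
      obtain ⟨D, E, L, TW, hD, hTW, hEL, hch⟩ :=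
        char_aux a b s d hs hab hd (w :: rest) (by simp)
      have hc : (0 : ℝ) ≤ s v + d v w := add_nonneg (hs v) (hd v w)
      refine ⟨D + (s v + d v w) + max (E - (s v + d v w) - b v) 0,
        max (a v) (min (E - (s v + d v w)) (b v)),
        max (a v) (min (L - (s v + d v w)) (b v)),
        TW + max (a v + (s v + d v w) - L) 0, ?_, ?_, ?_, ?_⟩
      · have := le_max_right (E - (s v + d v w) - b v) 0
        linarith
      · have := le_max_right (a v + (s v + d v w) - L) 0
        linarith
      · exact max_le_max (le_refl _) (min_le_min (by linarith) (le_refl _))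
      · intro t
        have hf : svcStart a b v t + s v + d v w
            = max (a v) (min t (b v)) + (s v + d v w) := by
          simp only [svcStart]; ring
        obtain ⟨hw, ha⟩ := hch (max (a v) (min t (b v)) + (s v + d v w))
        simp only [activeDur] at ha
        constructor
        · simp only [warp, hf, hw]
          have := key1 (a v) (b v) (s v + d v w) L t (hab v) hc
          linarith
        · simp only [activeDur, warp, comp, hf]
          have := key2 (a v) (b v) (s v + d v w) E D t (hab v) hc
          linarith

/-- Every nonempty sequence `σ` is characterized by a unique quadruple
`(D, E, L, TW)` with `D ≥ 0`, `TW ≥ 0`, `E ≤ L`, such that for every start time `t`: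
`W(σ, t) = TW + max(t − L, 0)` and `A(σ, t) = D + max(E − t, 0)`. -/
theorem exists_unique_characteristics [Fintype V]
    (a b s : V → ℝ) (d : V → V → ℝ)
    (hs : ∀ v, 0 ≤ s v) (hab : ∀ v, a v ≤ b v) (hd : ∀ u v, 0 ≤ d u v)
    (σ : List V) (hσ : σ ≠ []) :
    ∃! p : ℝ × ℝ × ℝ × ℝ,
      0 ≤ p.1 ∧ 0 ≤ p.2.2.2 ∧ p.2.1 ≤ p.2.2.1 ∧
      ∀ t : ℝ,
        warp a b s d σ t = p.2.2.2 + max (t - p.2.2.1) 0 ∧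
        activeDur a b s d σ t = p.1 + max (p.2.1 - t) 0 := by
  obtain ⟨D, E, L, TW, hD, hTW, hEL, hch⟩ := char_aux a b s d hs hab hd σ hσ
  refine ⟨(D, E, L, TW), ⟨hD, hTW, hEL, fun t => hch t⟩, ?_⟩
  rintro ⟨D', E', L', TW'⟩ ⟨_, _, _, hq⟩
  have hW : ∀ t : ℝ, TW' + max (t - L') 0 = TW + max (t - L) 0 := fun t =>
    ((hq t).1).symm.trans (hch t).1
  obtain ⟨hTWeq, hLeq⟩ := uniq1 TW' L' TW L hW
  have hA : ∀ t : ℝ, D' + max (E' - t) 0 = D + max (E - t) 0 := fun t =>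
    ((hq t).2).symm.trans (hch t).2
  obtain ⟨hDeq, hEeq⟩ := uniq2 D' E' D E hA
  simp [Prod.ext_iff, hDeq, hEeq, hLeq, hTWeq]
end

section
/- For any two sequences σ1 (with last visit u) and σ2 (with first visit v), the minimum time warp of the concatenation satisfies TW(σ1 ⊕ σ2) = TW(σ1) + TW(σ2) + Δ_TW, where δ = D(σ1) − TW(σ1) + d_{u v} and Δ_TW = max(E(σ1) + δ − L(σ2), 0). -/
variable {V : Type*}

/-- Minimum time warp `TW(σ) = min_t W(σ, t)`. -/
noncomputable def TWv (a b s : V → ℝ) (d : V → V → ℝ) (σ : List V) : ℝ :=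
  sInf (Set.range fun t => warp a b s d σ t)

/-- Latest start time achieving the minimum time warp: `L(σ) = max {t : W(σ,t) = TW(σ)}`. -/
noncomputable def Lv (a b s : V → ℝ) (d : V → V → ℝ) (σ : List V) : ℝ :=
  sSup {t | warp a b s d σ t = TWv a b s d σ}

/-- Minimum active duration `D(σ) = min_t A(σ, t)`. -/
noncomputable def Dv (a b s : V → ℝ) (d : V → V → ℝ) (σ : List V) : ℝ :=
  sInf (Set.range fun t => activeDur a b s d σ t)

/-- Earliest start time achieving the minimum duration: `E(σ) = min {t : A(σ,t) = D(σ)}`. -/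
noncomputable def Ev (a b s : V → ℝ) (d : V → V → ℝ) (σ : List V) : ℝ :=
  sInf {t | activeDur a b s d σ t = Dv a b s d σ}


section Aux

set_option maxHeartbeats 1000000 in
private lemma id0' (α β t : ℝ) (h : α ≤ β) :
    max α (min t β) = t + max (α - t) 0 - max (t - β) 0 := by
  simp only [max_def, min_def]; split_ifs <;> linarith

set_option maxHeartbeats 1000000 in
private lemma id1' (α β sx dxy L t : ℝ) (h : α ≤ β) :
    max (t - β) 0 + max (max α (min t β) + sx + dxy - L) 0
      = max (max α (min (L - sx - dxy) β) + sx + dxy - L) 0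
        + max (t - max α (min (L - sx - dxy) β)) 0 := by
  simp only [max_def, min_def]; split_ifs <;> linarith

set_option maxHeartbeats 1000000 in
private lemma id2' (α β sx dxy M t : ℝ) (h : α ≤ β) :
    max (M - (max α (min t β) + sx + dxy)) 0 + max (α - t) 0
      = max (M - sx - dxy - β) 0 + max (max α (min (M - sx - dxy) β) - t) 0 := by
  simp only [max_def, min_def]; split_ifs <;> linarith

private lemma sInf_range_eq_of (f : ℝ → ℝ) (m t0 : ℝ) (hle : ∀ t, m ≤ f t) (h0 : f t0 = m) :
    sInf (Set.range f) = m := by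
  apply le_antisymm
  · exact csInf_le ⟨m, by rintro x ⟨t, rfl⟩; exact hle t⟩ ⟨t0, h0⟩
  · exact le_csInf ⟨f 0, 0, rfl⟩ (by rintro x ⟨t, rfl⟩; exact hle t)

private lemma sInf_range_warp (W L : ℝ) : sInf (Set.range fun t => W + max (t - L) 0) = W :=
  sInf_range_eq_of _ W L (fun t => by simp [le_max_iff]) (by simp)

private lemma sSup_warp_level (W L : ℝ) : sSup {t : ℝ | W + max (t - L) 0 = W} = L := by
  have : {t : ℝ | W + max (t - L) 0 = W} = Set.Iic L := by
    ext t
    simp only [Set.mem_setOf_eq, Set.mem_Iic]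
    constructor
    · intro h
      by_contra hc
      push_neg at hc
      have : max (t - L) 0 = t - L := max_eq_left (by linarith)
      rw [this] at h; linarith
    · intro h
      rw [max_eq_right (by linarith)]; ring
  rw [this, csSup_Iic]

private lemma sInf_range_dur (D E : ℝ) : sInf (Set.range fun t => D + max (E - t) 0) = D :=
  sInf_range_eq_of _ D E (fun t => by simp [le_max_iff]) (by simp)

private lemma sInf_dur_level (D E : ℝ) : sInf {t : ℝ | D + max (E - t) 0 = D} = E := by
  have : {t : ℝ | D + max (E - t) 0 = D} = Set.Ici E := by
    ext t
    simp only [Set.mem_setOf_eq, Set.mem_Ici]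
    constructor
    · intro h
      by_contra hc
      push_neg at hc
      have : max (E - t) 0 = E - t := max_eq_left (by linarith)
      rw [this] at h; linarith
    · intro h
      rw [max_eq_right (by linarith)]; ring
  rw [this, csInf_Ici]

private theorem structure_lemma (a b s : V → ℝ) (d : V → V → ℝ) (hab : ∀ v, a v ≤ b v) :
    ∀ σ : List V, σ ≠ [] → ∃ W0 L0 D0 E0 : ℝ,
      (∀ t, warp a b s d σ t = W0 + max (t - L0) 0) ∧
      (∀ t, comp a b s d σ t = t + D0 + max (E0 - t) 0 - W0 - max (t - L0) 0)
  | [], h => absurd rfl h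
  | [v], _ =>
      ⟨0, b v, s v, a v,
        fun t => by simp [warp],
        fun t => by
          simp only [comp, svcStart]
          have := id0' (a v) (b v) t (hab v)
          linarith⟩
  | x :: y :: rest, _ => by
      obtain ⟨W', L', D', E', hW, hC⟩ :=
        structure_lemma a b s d hab (y :: rest) (by simp)
      refine ⟨W' + max (max (a x) (min (L' - s x - d x y) (b x)) + s x + d x y - L') 0,
        max (a x) (min (L' - s x - d x y) (b x)),
        D' + s x + d x y + max (E' - s x - d x y - b x) 0,
        max (a x) (min (E' - s x - d x y) (b x)), fun t => ?_, fun t => ?_⟩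
      · have h1 := id1' (a x) (b x) (s x) (d x y) L' t (hab x)
        simp only [warp, svcStart]
        rw [hW]
        linarith
      · have h1 := id1' (a x) (b x) (s x) (d x y) L' t (hab x)
        have h2 := id2' (a x) (b x) (s x) (d x y) E' t (hab x)
        have h0 := id0' (a x) (b x) t (hab x)
        simp only [comp, svcStart]
        rw [hC]
        linarith

private theorem warp_append (a b s : V → ℝ) (d : V → V → ℝ) (u v : V) :
    ∀ (σ1 tl : List V) (t : ℝ), σ1.getLast? = some u →
      warp a b s d (σ1 ++ v :: tl) t
        = warp a b s d σ1 t + warp a b s d (v :: tl) (comp a b s d σ1 t + d u v)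
  | [], _, _, h => by simp at h
  | [x], tl, t, h => by
      simp only [List.getLast?_singleton, Option.some.injEq] at h
      subst h
      simp only [List.cons_append, List.nil_append, warp, comp]
  | x :: y :: rest, tl, t, h => by
      have h' : (y :: rest).getLast? = some u := by
        rw [List.getLast?_cons_cons] at h; exact h
      have ih := warp_append a b s d u v (y :: rest) tl
        (svcStart a b x t + s x + d x y) h'
      simp only [List.cons_append] at ih ⊢
      simp only [warp, comp]
      rw [ih]
      ring

end Aux

/-- For sequences `σ₁` (with last visit `u`) and `σ₂` (with first visit `v`),
`TW(σ₁ ⊕ σ₂) = TW(σ₁) + TW(σ₂) + Δ_TW` where `δ = D(σ₁) − TW(σ₁) + d u v` and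
`Δ_TW = max(E(σ₁) + δ − L(σ₂), 0)`. -/
theorem concat_TW [Fintype V]
    (a b s : V → ℝ) (d : V → V → ℝ)
    (hs : ∀ v, 0 ≤ s v) (hab : ∀ v, a v ≤ b v) (hd : ∀ u v, 0 ≤ d u v)
    (σ₁ σ₂ : List V) (u v : V)
    (hu : σ₁.getLast? = some u) (hv : σ₂.head? = some v) :
    TWv a b s d (σ₁ ++ σ₂) =
      TWv a b s d σ₁ + TWv a b s d σ₂ +
        max (Ev a b s d σ₁ + (Dv a b s d σ₁ - TWv a b s d σ₁ + d u v) - Lv a b s d σ₂) 0 := by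
  -- σ₂ = v :: tl
  obtain ⟨tl, rfl⟩ : ∃ tl, σ₂ = v :: tl := by
    cases σ₂ with
    | nil => simp at hv
    | cons w tl =>
      simp only [List.head?_cons, Option.some.injEq] at hv
      exact ⟨tl, by rw [hv]⟩
  have hσ₁ : σ₁ ≠ [] := by
    intro h; rw [h] at hu; simp at hu
  obtain ⟨W1, L1, D1, E1, hW1, hC1⟩ := structure_lemma a b s d hab σ₁ hσ₁
  obtain ⟨W2, L2, D2, E2, hW2, hC2⟩ := structure_lemma a b s d hab (v :: tl) (by simp)
  -- values of the derived quantities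
  have hTW1 : TWv a b s d σ₁ = W1 := by
    unfold TWv
    rw [show (fun t => warp a b s d σ₁ t) = fun t => W1 + max (t - L1) 0 from funext hW1]
    exact sInf_range_warp W1 L1
  have hTW2 : TWv a b s d (v :: tl) = W2 := by
    unfold TWv
    rw [show (fun t => warp a b s d (v :: tl) t) = fun t => W2 + max (t - L2) 0 from
      funext hW2]
    exact sInf_range_warp W2 L2
  have hL2 : Lv a b s d (v :: tl) = L2 := by
    unfold Lv
    rw [hTW2]
    have : {t | warp a b s d (v :: tl) t = W2} = {t : ℝ | W2 + max (t - L2) 0 = W2} := by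
      ext t; rw [Set.mem_setOf_eq, Set.mem_setOf_eq, hW2]
    rw [this]
    exact sSup_warp_level W2 L2
  have hA1 : ∀ t, activeDur a b s d σ₁ t = D1 + max (E1 - t) 0 := fun t => by
    unfold activeDur; rw [hC1, hW1]; ring
  have hD1 : Dv a b s d σ₁ = D1 := by
    unfold Dv
    rw [show (fun t => activeDur a b s d σ₁ t) = fun t => D1 + max (E1 - t) 0 from
      funext hA1]
    exact sInf_range_dur D1 E1
  have hE1 : Ev a b s d σ₁ = E1 := by
    unfold Ev
    rw [hD1]
    have : {t | activeDur a b s d σ₁ t = D1} = {t : ℝ | D1 + max (E1 - t) 0 = D1} := by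
      ext t; rw [Set.mem_setOf_eq, Set.mem_setOf_eq, hA1]
    rw [this]
    exact sInf_dur_level D1 E1
  -- closed form of the warp of the concatenation
  have hWapp : ∀ t, warp a b s d (σ₁ ++ v :: tl) t
      = W1 + W2 + (max (t - L1) 0
        + max (t + D1 + max (E1 - t) 0 - W1 - max (t - L1) 0 + d u v - L2) 0) := fun t => by
    rw [warp_append a b s d u v σ₁ tl t hu, hW2, hW1, hC1]
    ring
  rw [hTW1, hTW2, hL2, hD1, hE1]
  unfold TWv
  rw [show (fun t => warp a b s d (σ₁ ++ v :: tl) t)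
      = fun t => W1 + W2 + (max (t - L1) 0
        + max (t + D1 + max (E1 - t) 0 - W1 - max (t - L1) 0 + d u v - L2) 0) from
    funext hWapp]
  apply sInf_range_eq_of _ _ (min E1 L1)
  · intro t
    have a1 := le_max_left (t - L1) (0 : ℝ)
    have a2 := le_max_right (t - L1) (0 : ℝ)
    have a3 := le_max_left (t + D1 + max (E1 - t) 0 - W1 - max (t - L1) 0 + d u v - L2) (0 : ℝ)
    have a4 := le_max_right (t + D1 + max (E1 - t) 0 - W1 - max (t - L1) 0 + d u v - L2) (0 : ℝ)
    have a5 := le_max_left (E1 - t) (0 : ℝ)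
    have : max (E1 + (D1 - W1 + d u v) - L2) 0
        ≤ max (t - L1) 0
          + max (t + D1 + max (E1 - t) 0 - W1 - max (t - L1) 0 + d u v - L2) 0 :=
      max_le (by linarith) (by linarith)
    linarith
  · have hm1 : max (min E1 L1 - L1) 0 = 0 :=
      max_eq_right (by simp [min_le_right])
    have hm2 : max (E1 - min E1 L1) 0 = E1 - min E1 L1 :=
      max_eq_left (by simp [min_le_left])
    rw [hm1, hm2]
    have : min E1 L1 + D1 + (E1 - min E1 L1) - W1 - 0 + d u v - L2
        = E1 + (D1 - W1 + d u v) - L2 := by ring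
    rw [this]
    ring
end

section
/- For any two sequences σ1 (with last visit u) and σ2 (with first visit v), the latest optimal start time of the concatenation satisfies L(σ1 ⊕ σ2) = min(L(σ2) − δ, L(σ1)) + Δ_TW, where δ = D(σ1) − TW(σ1) + d_{u v} and Δ_TW = max(E(σ1) + δ − L(σ2), 0). -/
variable {V : Type*}

/-! ### Auxiliary algebraic lemmas -/

private lemma clip {a b : ℝ} (hab : a ≤ b) (c X t : ℝ) :
    max (t - b) 0 + max (max a (min t b) + c - X) 0
      = max (t - max a (min (X - c) b)) 0 + max (a + c - X) 0 := by
  simp only [max_def, min_def]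
  split_ifs <;> linarith

private lemma clamp_eq {E L : ℝ} (h : E ≤ L) (t : ℝ) :
    max t E - max (t - L) 0 = max E (min t L) := by
  simp only [max_def, min_def]
  split_ifs <;> linarith

private lemma Lmax_eq {E L₁ L₂ δ : ℝ} (h : E ≤ L₁) :
    max E (min (L₂ - δ) L₁) = min (L₂ - δ) L₁ + max (E + δ - L₂) 0 := by
  simp only [max_def, min_def]
  split_ifs <;> linarith

private lemma max_shift (p q : ℝ) : max p q = max (p - q) 0 + q := by
  simp only [max_def]; split_ifs <;> linarith

/-! ### Structure of `warp` and `comp + warp` -/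

private lemma struct (a b s : V → ℝ) (d : V → V → ℝ) (hab : ∀ v, a v ≤ b v) :
    ∀ σ : List V, σ ≠ [] → ∃ L K E D : ℝ, E ≤ L ∧
      (∀ t, warp a b s d σ t = max (t - L) 0 + K) ∧
      (∀ t, comp a b s d σ t + warp a b s d σ t = max t E + D) := by
  intro σ
  induction σ with
  | nil => simp
  | cons x tail ih =>
    intro _
    cases tail with
    | nil =>
      refine ⟨b x, 0, a x, s x, hab x, fun t => by simp [warp], fun t => ?_⟩
      simp only [comp, warp, svcStart]
      have := hab x
      simp only [max_def, min_def]
      split_ifs <;> linarith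
    | cons y rest =>
      obtain ⟨L, K, E, D, hEL, hW, hG⟩ := ih (by simp)
      refine ⟨max (a x) (min (L - (s x + d x y)) (b x)), max (a x + (s x + d x y) - L) 0 + K,
              max (a x) (min (E - (s x + d x y)) (b x)),
              max (a x + (s x + d x y) - E) 0 + E + D
                - max (a x) (min (E - (s x + d x y)) (b x)),
              ?_, fun t => ?_, fun t => ?_⟩
      · exact max_le_max le_rfl (min_le_min (by linarith) le_rfl)
      · simp only [warp]
        have hx : svcStart a b x t + s x + d x y
            = max (a x) (min t (b x)) + (s x + d x y) := by
          simp [svcStart]; ring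
        rw [hx, hW]
        have := clip (hab x) (s x + d x y) L t
        linarith
      · simp only [comp, warp]
        have hx : svcStart a b x t + s x + d x y
            = max (a x) (min t (b x)) + (s x + d x y) := by
          simp [svcStart]; ring
        rw [hx]
        have h2 := hG (max (a x) (min t (b x)) + (s x + d x y))
        have h1 := clip (hab x) (s x + d x y) E t
        have h3 := max_shift (max (a x) (min t (b x)) + (s x + d x y)) E
        have h4 := max_shift t (max (a x) (min (E - (s x + d x y)) (b x)))
        linarith

/-! ### Extraction of `TWv`, `Lv`, `Dv`, `Ev` from the structural form -/

private lemma range_inf {g : ℝ → ℝ} {K t₀ : ℝ} (hle : ∀ t, K ≤ g t) (ht : g t₀ = K) :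
    sInf (Set.range g) = K :=
  le_antisymm (csInf_le ⟨K, by rintro x ⟨t, rfl⟩; exact hle t⟩ ⟨t₀, ht⟩)
    (le_csInf ⟨g 0, 0, rfl⟩ (by rintro x ⟨t, rfl⟩; exact hle t))

private lemma TWv_eq {a b s : V → ℝ} {d : V → V → ℝ} {σ : List V} {L K : ℝ}
    (h : ∀ t, warp a b s d σ t = max (t - L) 0 + K) :
    TWv a b s d σ = K := by
  apply range_inf (t₀ := L)
  · intro t; rw [h]; have := le_max_right (t - L) (0:ℝ); linarith
  · rw [h]; simp

private lemma Lv_eq {a b s : V → ℝ} {d : V → V → ℝ} {σ : List V} {L K : ℝ}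
    (h : ∀ t, warp a b s d σ t = max (t - L) 0 + K) :
    Lv a b s d σ = L := by
  unfold Lv
  rw [TWv_eq h]
  have hset : {t | warp a b s d σ t = K} = Set.Iic L := by
    ext t
    simp only [Set.mem_setOf_eq, Set.mem_Iic, h t]
    constructor
    · intro he
      have h0 : max (t - L) 0 = 0 := by linarith
      have := max_eq_right_iff.mp h0
      linarith
    · intro hle
      rw [max_eq_right (by linarith)]; ring
  rw [hset, csSup_Iic]

private lemma activeDur_eq_s8 {a b s : V → ℝ} {d : V → V → ℝ} {σ : List V} {E D : ℝ}
    (h : ∀ t, comp a b s d σ t + warp a b s d σ t = max t E + D) :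
    ∀ t, activeDur a b s d σ t = max (E - t) 0 + D := by
  intro t
  have h1 := h t
  have h2 := max_shift E t
  have h3 : max t E = max E t := max_comm _ _
  unfold activeDur
  linarith

private lemma Dv_eq {a b s : V → ℝ} {d : V → V → ℝ} {σ : List V} {E D : ℝ}
    (h : ∀ t, comp a b s d σ t + warp a b s d σ t = max t E + D) :
    Dv a b s d σ = D := by
  have hA := activeDur_eq_s8 h
  apply range_inf (t₀ := E)
  · intro t; rw [hA]; have := le_max_right (E - t) (0:ℝ); linarith
  · rw [hA]; simp

private lemma Ev_eq {a b s : V → ℝ} {d : V → V → ℝ} {σ : List V} {E D : ℝ}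
    (h : ∀ t, comp a b s d σ t + warp a b s d σ t = max t E + D) :
    Ev a b s d σ = E := by
  have hA := activeDur_eq_s8 h
  unfold Ev
  rw [Dv_eq h]
  have hset : {t | activeDur a b s d σ t = D} = Set.Ici E := by
    ext t
    simp only [Set.mem_setOf_eq, Set.mem_Ici, hA t]
    constructor
    · intro he
      have h0 : max (E - t) 0 = 0 := by linarith
      have := max_eq_right_iff.mp h0
      linarith
    · intro hle
      rw [max_eq_right (by linarith)]; ring
  rw [hset, csInf_Ici]

/-! ### Concatenation of schedules -/

private lemma append_struct (a b s : V → ℝ) (d : V → V → ℝ) (v : V) (σ₂' : List V) :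
    ∀ (σ₁ : List V) (u : V), σ₁.getLast? = some u → ∀ t : ℝ,
      comp a b s d (σ₁ ++ v :: σ₂') t
        = comp a b s d (v :: σ₂') (comp a b s d σ₁ t + d u v) ∧
      warp a b s d (σ₁ ++ v :: σ₂') t
        = warp a b s d σ₁ t + warp a b s d (v :: σ₂') (comp a b s d σ₁ t + d u v) := by
  intro σ₁
  induction σ₁ with
  | nil => intro u h; simp at h
  | cons x tail ih =>
    intro u h t
    cases tail with
    | nil =>
      simp only [List.getLast?_singleton, Option.some.injEq] at h
      subst h
      constructor
      · simp [comp]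
      · simp [comp, warp]
    | cons y rest =>
      have h' : (y :: rest).getLast? = some u := by
        rwa [List.getLast?_cons_cons] at h
      have hih := ih u h' (svcStart a b x t + s x + d x y)
      constructor
      · show comp a b s d (y :: (rest ++ v :: σ₂')) (svcStart a b x t + s x + d x y) = _
        have : y :: (rest ++ v :: σ₂') = (y :: rest) ++ v :: σ₂' := by simp
        rw [this, hih.1]
        rfl
      · show max (t - b x) 0 + warp a b s d (y :: (rest ++ v :: σ₂'))
            (svcStart a b x t + s x + d x y) = _
        have : y :: (rest ++ v :: σ₂') = (y :: rest) ++ v :: σ₂' := by simp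
        rw [this, hih.2]
        show _ = max (t - b x) 0 + warp a b s d (y :: rest) (svcStart a b x t + s x + d x y)
            + warp a b s d (v :: σ₂') (comp a b s d (y :: rest) (svcStart a b x t + s x + d x y) + d u v)
        ring

/-- For sequences `σ₁` (with last visit `u`) and `σ₂` (with first visit `v`),
`L(σ₁ ⊕ σ₂) = min(L(σ₂) − δ, L(σ₁)) + Δ_TW` where `δ = D(σ₁) − TW(σ₁) + d u v` and
`Δ_TW = max(E(σ₁) + δ − L(σ₂), 0)`. -/
theorem concat_L [Fintype V]
    (a b s : V → ℝ) (d : V → V → ℝ)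
    (hs : ∀ v, 0 ≤ s v) (hab : ∀ v, a v ≤ b v) (hd : ∀ u v, 0 ≤ d u v)
    (σ₁ σ₂ : List V) (u v : V)
    (hu : σ₁.getLast? = some u) (hv : σ₂.head? = some v) :
    Lv a b s d (σ₁ ++ σ₂) =
      min (Lv a b s d σ₂ - (Dv a b s d σ₁ - TWv a b s d σ₁ + d u v)) (Lv a b s d σ₁) +
        max (Ev a b s d σ₁ + (Dv a b s d σ₁ - TWv a b s d σ₁ + d u v) - Lv a b s d σ₂) 0 := by
  cases σ₂ with
  | nil => simp at hv
  | cons v' σ₂' =>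
    simp only [List.head?_cons, Option.some.injEq] at hv
    subst hv
    have h1ne : σ₁ ≠ [] := by
      intro h; rw [h] at hu; simp at hu
    obtain ⟨L₁, K₁, E₁, D₁, hEL, hW₁, hG₁⟩ := struct a b s d hab σ₁ h1ne
    obtain ⟨L₂, K₂, E₂, D₂, _, hW₂, _⟩ := struct a b s d hab (v' :: σ₂') (by simp)
    have hTW₁ : TWv a b s d σ₁ = K₁ := TWv_eq hW₁
    have hL₁ : Lv a b s d σ₁ = L₁ := Lv_eq hW₁
    have hL₂ : Lv a b s d (v' :: σ₂') = L₂ := Lv_eq hW₂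
    have hD₁ : Dv a b s d σ₁ = D₁ := Dv_eq hG₁
    have hE₁ : Ev a b s d σ₁ = E₁ := Ev_eq hG₁
    rw [hTW₁, hL₁, hL₂, hD₁, hE₁]
    set δ : ℝ := D₁ - K₁ + d u v' with hδ
    have key : ∀ t, warp a b s d (σ₁ ++ v' :: σ₂') t
        = max (t - (min (L₂ - δ) L₁ + max (E₁ + δ - L₂) 0)) 0
            + (K₁ + (max (E₁ + δ - L₂) 0 + K₂)) := by
      intro t
      have hap := (append_struct a b s d v' σ₂' σ₁ u hu t).2
      rw [hap, hW₁ t, hW₂ (comp a b s d σ₁ t + d u v')]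
      have harg : comp a b s d σ₁ t + d u v' - L₂ = max E₁ (min t L₁) + δ - L₂ := by
        have hg := hG₁ t
        have hw := hW₁ t
        have hc := clamp_eq hEL t
        rw [hδ]
        linarith
      rw [harg]
      have hclip := clip hEL δ L₂ t
      have hLm : max E₁ (min (L₂ - δ) L₁) = min (L₂ - δ) L₁ + max (E₁ + δ - L₂) 0 :=
        Lmax_eq hEL
      have hsh := max_shift (t - max E₁ (min (L₂ - δ) L₁))
          (max (E₁ + δ - L₂) 0 - max (E₁ + δ - L₂) 0)
      -- relate max (t - X) 0 and max (t - (X')) 0 where X = X'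
      have hX : max (t - max E₁ (min (L₂ - δ) L₁)) 0
          = max (t - (min (L₂ - δ) L₁ + max (E₁ + δ - L₂) 0)) 0 := by
        rw [hLm]
      linarith
    rw [Lv_eq key]
end
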